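/- 6·L(1/3) + 3·L(1/4) = π²/2, where L is the Rogers L-function. -/

import Mathlib

open Real MeasureTheory intervalIntegral Set Filter Topology

noncomputable def Li2 (x : ℝ) : ℝ := -∫ t in (0:ℝ)..x, Real.log (1 - t) / t

noncomputable def rogersL (x : ℝ) : ℝ :=
  Li2 x + (1/2) * Real.log |x| * Real.log (1 - x)

noncomputable def G (t : ℝ) : ℝ := if t = 0 then 1 else -(Real.log (1 - t) / t)

lemma G_ne {t : ℝ} (ht : t ≠ 0) : G t = -(Real.log (1 - t) / t) := if_neg ht

lemma G_zero : G 0 = 1 := if_pos rfl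

lemma contG {x : ℝ} (hx : x ≠ 1) : ContinuousAt G x := by
  rcases eq_or_ne x 0 with rfl | hx0
  · have hd : HasDerivAt (fun t : ℝ => -Real.log (1 - t)) 1 0 := by
      have := ((Real.hasDerivAt_log (by norm_num : (1:ℝ) - 0 ≠ 0)).comp 0
        ((hasDerivAt_id (0:ℝ)).const_sub 1)).neg
      exact this.congr_deriv (by norm_num)
    have hslope := hasDerivAt_iff_tendsto_slope.mp hd
    have heq : ∀ t : ℝ, t ≠ 0 → slope (fun t : ℝ => -Real.log (1 - t)) 0 t = G t := by
      intro t ht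
      rw [G_ne ht]
      simp [slope, ht]
      ring
    rw [ContinuousAt, G_zero]
    rw [← nhdsNE_sup_pure 0, tendsto_sup]
    constructor
    · exact hslope.congr' (by filter_upwards [self_mem_nhdsWithin] with t ht using heq t ht)
    · simpa [G_zero] using tendsto_pure_nhds G 0
  · have hc : ContinuousAt (fun t : ℝ => -(Real.log (1 - t) / t)) x := by
      have h1 : ContinuousAt (fun t : ℝ => Real.log (1 - t)) x :=
        (Real.continuousAt_log (by simpa [sub_ne_zero] using (Ne.symm hx))).comp
          (continuousAt_const.sub continuousAt_id)
      exact (h1.div continuousAt_id hx0).neg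
    exact hc.congr (by filter_upwards [isOpen_ne.mem_nhds hx0] with t ht using (G_ne ht).symm)

lemma Li2_eq (x : ℝ) : Li2 x = ∫ t in (0:ℝ)..x, G t := by
  rw [Li2, ← intervalIntegral.integral_neg]
  apply intervalIntegral.integral_congr_ae
  have h0 : ∀ᵐ t : ℝ, t ≠ 0 := by
    rw [ae_iff]; simpa using measure_singleton (0:ℝ)
  filter_upwards [h0] with t ht _ using (G_ne ht).symm

lemma contOnG {s : Set ℝ} (hs : ∀ t ∈ s, t ≠ 1) : ContinuousOn G s :=
  fun t ht => (contG (hs t ht)).continuousWithinAt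

lemma Li2_hasDerivAt {x : ℝ} (hx : x < 1) : HasDerivAt Li2 (G x) x := by
  have hfun : Li2 = fun y => ∫ t in (0:ℝ)..y, G t := funext Li2_eq
  rw [hfun]
  have hint : IntervalIntegrable G volume 0 x := by
    apply ContinuousOn.intervalIntegrable
    apply contOnG
    intro t ht
    rcases le_or_gt 0 x with h | h
    · rw [uIcc_of_le h] at ht; exact (ht.2.trans_lt hx).ne
    · rw [uIcc_of_ge h.le] at ht; exact (ht.2.trans_lt one_pos).ne
  exact intervalIntegral.integral_hasDerivAt_right hint
    (ContinuousOn.stronglyMeasurableAtFilter isOpen_Iio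
      (contOnG fun t ht => ht.ne) x hx) (contG hx.ne)

lemma const_on {F : ℝ → ℝ} {a b : ℝ} (hab : a ≤ b)
    (hderiv : ∀ x ∈ Icc a b, HasDerivAt F 0 x) : F b = F a :=
  constant_of_has_deriv_right_zero
    (fun x hx => ((hderiv x hx).continuousAt).continuousWithinAt)
    (fun x hx => ((hderiv x (Ico_subset_Icc_self hx)).hasDerivWithinAt))
    b (right_mem_Icc.2 hab)

lemma Li2_zero : Li2 0 = 0 := by simp [Li2]

-- Landen at x ∈ [0,1/3]
lemma landen : Li2 (1/3) + Li2 (-(1/2)) + (1/2) * (Real.log (1 - 1/3))^2 = 0 := by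
  set F : ℝ → ℝ := fun x => Li2 x + Li2 (x / (x - 1)) + (1/2) * (Real.log (1 - x))^2 with hF
  have key : ∀ x ∈ Icc (0:ℝ) (1/3), HasDerivAt F 0 x := by
    intro x hx
    obtain ⟨hx0, hx1⟩ := hx
    have hxlt : x < 1 := lt_of_le_of_lt hx1 (by norm_num)
    have hxm1 : x - 1 ≠ 0 := by intro h; rw [sub_eq_zero] at h; exact hxlt.ne h
    have h1x : (1:ℝ) - x ≠ 0 := by intro h; rw [sub_eq_zero] at h; exact hxlt.ne h.symm
    have hune : x / (x - 1) < 1 := by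
      have : x / (x - 1) ≤ 0 := div_nonpos_of_nonneg_of_nonpos hx0 (by linarith)
      linarith
    have h1 : HasDerivAt Li2 (G x) x := Li2_hasDerivAt hxlt
    have hu : HasDerivAt (fun x : ℝ => x / (x - 1))
        ((1 * (x - 1) - x * 1) / (x - 1)^2) x :=
      (hasDerivAt_id x).div ((hasDerivAt_id x).sub_const 1) hxm1
    have h2 : HasDerivAt (fun x : ℝ => Li2 (x / (x - 1)))
        (G (x / (x - 1)) * ((1 * (x - 1) - x * 1) / (x - 1)^2)) x :=
      HasDerivAt.comp (h₂ := Li2) (h := fun x : ℝ => x / (x - 1)) x (Li2_hasDerivAt hune) hu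
    have hlog : HasDerivAt (fun x : ℝ => Real.log (1 - x)) (-(1 - x)⁻¹) x := by
      have := (Real.hasDerivAt_log h1x).comp x
        ((hasDerivAt_id x).const_sub 1)
      exact this.congr_deriv (by ring)
    have h3 : HasDerivAt (fun x : ℝ => (1/2) * (Real.log (1 - x))^2)
        ((1/2) * ((2 : ℕ) * (Real.log (1 - x))^1 * (-(1 - x)⁻¹))) x :=
      (hlog.pow 2).const_mul (1/2)
    have hsum := (h1.add h2).add h3
    refine hsum.congr_deriv ?_
    rcases eq_or_ne x 0 with rfl | hx0'
    · simp [G_zero]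
    · have hu0 : x / (x - 1) ≠ 0 := div_ne_zero hx0' hxm1
      rw [G_ne hx0', G_ne hu0]
      have hlogeq : Real.log (1 - x / (x - 1)) = - Real.log (1 - x) := by
        have : 1 - x / (x - 1) = (1 - x)⁻¹ := by field_simp; ring
        rw [this, Real.log_inv]
      rw [hlogeq]
      field_simp
      ring
  have hc := const_on (by norm_num) key
  have h0 : F 0 = 0 := by simp [hF, Li2_zero]
  rw [h0] at hc
  have h2 : F (1/3) = Li2 (1/3) + Li2 (-(1/2)) + (1/2) * (Real.log (1 - 1/3))^2 := by
    simp only [hF]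
    rw [show (1:ℝ)/3/((1:ℝ)/3-1) = -(1/2) by norm_num]
  rw [h2] at hc
  exact hc

-- duplication: Li2 (1/4) = 2 Li2 (1/2) + 2 Li2 (-(1/2))
lemma dup : Li2 (1/4) = 2 * Li2 (1/2) + 2 * Li2 (-(1/2)) := by
  set F : ℝ → ℝ := fun x => Li2 (x^2) - 2 * Li2 x - 2 * Li2 (-x) with hF
  have key : ∀ x ∈ Icc (0:ℝ) (1/2), HasDerivAt F 0 x := by
    intro x ⟨hx0, hx1⟩
    have hxlt : x < 1 := lt_of_le_of_lt hx1 (by norm_num)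
    have hsq : x^2 < 1 := by nlinarith
    have hneg : -x < 1 := by linarith
    have h1 : HasDerivAt (fun x : ℝ => Li2 (x^2)) (G (x^2) * ((2:ℕ) * x ^ (2-1))) x :=
      HasDerivAt.comp (h₂ := Li2) (h := fun x : ℝ => x^2) x (Li2_hasDerivAt hsq)
        (hasDerivAt_pow 2 x)
    have h2 : HasDerivAt (fun x : ℝ => 2 * Li2 x) (2 * G x) x :=
      (Li2_hasDerivAt hxlt).const_mul 2
    have h3 : HasDerivAt (fun x : ℝ => 2 * Li2 (-x)) (2 * (G (-x) * (-1))) x :=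
      (((Li2_hasDerivAt hneg).comp x (hasDerivAt_neg x))).const_mul 2
    have hsum := (h1.sub h2).sub h3
    refine hsum.congr_deriv ?_
    rcases eq_or_ne x 0 with rfl | hx0'
    · simp [G_zero]
    · have hsq0 : x^2 ≠ 0 := pow_ne_zero 2 hx0'
      have hneg0 : -x ≠ 0 := neg_ne_zero.mpr hx0'
      have h1x : (1:ℝ) - x ≠ 0 := sub_ne_zero.mpr hxlt.ne'
      have h1px : (1:ℝ) + x ≠ 0 := by positivity
      rw [G_ne hx0', G_ne hsq0, G_ne hneg0]
      have hlogsq : Real.log (1 - x^2) = Real.log (1 - x) + Real.log (1 + x) := by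
        rw [← Real.log_mul h1x h1px]; ring_nf
      rw [hlogsq]
      have : 1 - -x = 1 + x := by ring
      rw [this]
      field_simp
      ring
  have hc := const_on (by norm_num) key
  have h0 : F 0 = 0 := by simp [hF, Li2_zero]
  rw [h0] at hc
  have h2 : F (1/2) = Li2 (1/4) - 2 * Li2 (1/2) - 2 * Li2 (-(1/2)) := by
    simp only [hF]
    norm_num
  rw [h2] at hc
  linarith

-- integrability of log on (0, 1/2)
lemma log_int : IntervalIntegrable Real.log volume 0 (1/2) := by
  have hcont : ContinuousOn (fun t : ℝ => t - t * Real.log t) (uIcc 0 (1/2)) :=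
    (continuous_id.sub Real.continuous_mul_log).continuousOn
  have hderiv : ∀ x ∈ Ioo (min (0:ℝ) (1/2)) (max 0 (1/2)),
      HasDerivAt (fun t : ℝ => t - t * Real.log t) (-Real.log x) x := by
    intro x hx
    rw [min_eq_left (by norm_num : (0:ℝ) ≤ 1/2), max_eq_right (by norm_num : (0:ℝ) ≤ 1/2)] at hx
    have hd : HasDerivAt (fun t : ℝ => t - t * Real.log t)
        (1 - (1 * Real.log x + x * x⁻¹)) x :=
      (hasDerivAt_id x).sub ((hasDerivAt_id x).mul (Real.hasDerivAt_log hx.1.ne'))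
    convert hd using 1
    rw [mul_inv_cancel₀ hx.1.ne']
    ring
  have hpos : ∀ x ∈ Ioo (min (0:ℝ) (1/2)) (max 0 (1/2)), 0 ≤ -Real.log x := by
    intro x hx
    rw [min_eq_left (by norm_num : (0:ℝ) ≤ 1/2), max_eq_right (by norm_num : (0:ℝ) ≤ 1/2)] at hx
    have : Real.log x ≤ 0 := Real.log_nonpos hx.1.le (by linarith [hx.2])
    linarith
  have h := intervalIntegrable_deriv_of_nonneg hcont hderiv hpos
  have h2 := h.neg
  norm_num at h2
  convert h2 using 1
  funext t
  simp

lemma G_int : IntegrableOn G (Icc 0 1) := by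
  have hA : IntegrableOn G (Icc 0 (1/2)) :=
    (contOnG (fun t ht => by rintro rfl; exact absurd ht.2 (by norm_num))).integrableOn_compact
      isCompact_Icc
  have hB : IntegrableOn G (Icc (1/2) 1) := by
    have hl : IntervalIntegrable (fun t : ℝ => Real.log (1 - t)) volume (1/2) 1 := by
      have lint : IntervalIntegrable Real.log volume 0 (1/2) := log_int
      have := lint.comp_sub_left 1
      norm_num at this
      exact this.symm
    have hm : IntervalIntegrable (fun t : ℝ => -(Real.log (1 - t) * t⁻¹)) volume (1/2) 1 := by
      apply IntervalIntegrable.neg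
      apply hl.mul_continuousOn
      apply ContinuousOn.inv₀ continuousOn_id
      intro t ht
      rw [uIcc_of_le (by norm_num : (1:ℝ)/2 ≤ 1)] at ht
      exact ne_of_gt (lt_of_lt_of_le (by norm_num) ht.1)
    have := (intervalIntegrable_iff_integrableOn_Icc_of_le (by norm_num : (1:ℝ)/2 ≤ 1)).mp hm
    apply this.congr_fun ?_ measurableSet_Icc
    intro t ht
    rw [G_ne (by intro h; rw [h] at ht; exact absurd ht.1 (by norm_num))]
    rw [div_eq_mul_inv]
  have : Icc (0:ℝ) 1 ⊆ Icc 0 (1/2) ∪ Icc (1/2) 1 := by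
    intro t ht
    rcases le_or_gt t (1/2) with h | h
    · exact Or.inl ⟨ht.1, h⟩
    · exact Or.inr ⟨h.le, ht.2⟩
  exact (hA.union hB).mono_set this

lemma hasSum_inv_sq : HasSum (fun n : ℕ => 1 / ((n:ℝ)+1)^2) (π^2/6) := by
  have h := hasSum_zeta_two
  have h2 := (hasSum_nat_add_iff' (f := fun n : ℕ => (1:ℝ) / (n:ℝ)^2) 1).mpr h
  simp only [Finset.range_one, Finset.sum_singleton, Nat.cast_zero] at h2
  norm_num at h2
  convert h2 using 2 with n
  · rfl
  push_cast
  ring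

lemma G_sum {t : ℝ} (ht : t ∈ Ioo (0:ℝ) 1) :
    HasSum (fun n : ℕ => t^n / ((n:ℝ)+1)) (G t) := by
  have habs : |t| < 1 := by rw [abs_of_pos ht.1]; exact ht.2
  have h := (hasSum_pow_div_log_of_abs_lt_one habs).div_const t
  have heq : (fun i : ℕ => t^(i+1)/((i:ℝ)+1)/t) = fun i : ℕ => t^i/((i:ℝ)+1) := by
    funext i
    rw [div_div, pow_succ, mul_comm ((i:ℝ)+1) t, ← div_div, mul_div_assoc,
      div_self ht.1.ne', mul_one]
  have hG : G t = -Real.log (1 - t) / t := by rw [G_ne ht.1.ne', neg_div]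
  rw [hG, ← heq]
  exact h

lemma Li2_one : Li2 1 = π^2/6 := by
  have hmeq : ∀ t ∈ Ioo (0:ℝ) 1, G t = ∑' n : ℕ, t^n / ((n:ℝ)+1) := fun t ht =>
    (G_sum ht).tsum_eq.symm
  have hint : ∀ n : ℕ, Integrable (fun t : ℝ => t^n / ((n:ℝ)+1))
      (volume.restrict (Ioo 0 1)) := by
    intro n
    have : Continuous (fun t : ℝ => t^n / ((n:ℝ)+1)) := by continuity
    exact (this.integrableOn_Ioc).mono_set Ioo_subset_Ioc_self
  have hval : ∀ n : ℕ, ∫ t in Ioo (0:ℝ) 1, t^n / ((n:ℝ)+1) = 1 / ((n:ℝ)+1)^2 := by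
    intro n
    rw [← integral_Ioc_eq_integral_Ioo, ← intervalIntegral.integral_of_le zero_le_one]
    rw [intervalIntegral.integral_div, integral_pow]
    have : ((n:ℝ)+1) ≠ 0 := by positivity
    field_simp
    ring
  have hnorm : ∀ n : ℕ, ∫ t in Ioo (0:ℝ) 1, ‖t^n / ((n:ℝ)+1)‖ = 1 / ((n:ℝ)+1)^2 := by
    intro n
    rw [← hval n]
    apply setIntegral_congr_fun measurableSet_Ioo
    intro t ht
    show ‖t^n / ((n:ℝ)+1)‖ = t^n / ((n:ℝ)+1)
    rw [Real.norm_eq_abs, abs_of_nonneg]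
    have := ht.1
    positivity
  have hsummable : Summable (fun n : ℕ => ∫ t in Ioo (0:ℝ) 1, ‖t^n / ((n:ℝ)+1)‖) := by
    simp_rw [hnorm]
    exact hasSum_inv_sq.summable
  have hkey := hasSum_integral_of_summable_integral_norm hint hsummable
  simp_rw [hval] at hkey
  have : (∫ t in Ioo (0:ℝ) 1, ∑' n : ℕ, t^n / ((n:ℝ)+1)) = Li2 1 := by
    rw [Li2_eq, intervalIntegral.integral_of_le zero_le_one, integral_Ioc_eq_integral_Ioo]
    exact setIntegral_congr_fun measurableSet_Ioo (fun t ht => (hmeq t ht).symm)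
  rw [this] at hkey
  exact (hasSum_inv_sq.unique hkey).symm

noncomputable def R (x : ℝ) : ℝ := Li2 x + Li2 (1 - x) + Real.log x * Real.log (1 - x)

lemma R_deriv {x : ℝ} (hx0 : 0 < x) (hx1 : x < 1) : HasDerivAt R 0 x := by
  have h1x : (1:ℝ) - x ≠ 0 := sub_ne_zero.mpr hx1.ne'
  have h1 : HasDerivAt Li2 (G x) x := Li2_hasDerivAt hx1
  have h2 : HasDerivAt (fun x : ℝ => Li2 (1 - x)) (G (1 - x) * (-1)) x :=
    HasDerivAt.comp (h₂ := Li2) (h := fun x : ℝ => 1 - x) x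
      (Li2_hasDerivAt (by linarith)) ((hasDerivAt_id x).const_sub 1)
  have hlog1 : HasDerivAt (fun x : ℝ => Real.log x) x⁻¹ x := Real.hasDerivAt_log hx0.ne'
  have hlog2 : HasDerivAt (fun x : ℝ => Real.log (1 - x)) (-(1 - x)⁻¹) x := by
    have := (Real.hasDerivAt_log h1x).comp x ((hasDerivAt_id x).const_sub 1)
    exact this.congr_deriv (by ring)
  have h3 : HasDerivAt (fun x : ℝ => Real.log x * Real.log (1 - x))
      (x⁻¹ * Real.log (1 - x) + Real.log x * (-(1 - x)⁻¹)) x := hlog1.mul hlog2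
  have hsum := (h1.add h2).add h3
  have : R = fun x => Li2 x + Li2 (1 - x) + Real.log x * Real.log (1 - x) := rfl
  rw [this]
  refine hsum.congr_deriv ?_
  rw [G_ne hx0.ne', G_ne h1x, show (1:ℝ) - (1 - x) = x from by ring]
  field_simp
  ring

lemma R_half : R (1/2) = π^2/6 := by
  -- R is constant on (0, 1/2]; take limit at 0+
  have hconst : ∀ c ∈ Ioc (0:ℝ) (1/2), R (1/2) = R c := by
    intro c hc
    exact const_on hc.2 (fun x hx => R_deriv (lt_of_lt_of_le hc.1 hx.1)
      (lt_of_le_of_lt hx.2 (by norm_num)))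
  have hlim : Tendsto R (𝓝[>] (0:ℝ)) (𝓝 (π^2/6)) := by
    have hA : Tendsto (fun x : ℝ => Li2 x) (𝓝[>] (0:ℝ)) (𝓝 0) := by
      have := (Li2_hasDerivAt (by norm_num : (0:ℝ) < 1)).continuousAt
      rw [ContinuousAt, Li2_zero] at this
      exact this.mono_left nhdsWithin_le_nhds
    have hB : Tendsto (fun x : ℝ => Li2 (1 - x)) (𝓝[>] (0:ℝ)) (𝓝 (π^2/6)) := by
      have hcont : ContinuousOn (fun y => ∫ t in (0:ℝ)..y, G t) (Icc 0 1) := by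
        have h := intervalIntegral.continuousOn_primitive_interval (a := 0) (b := 1)
          (μ := volume) (f := G) (by rw [uIcc_of_le zero_le_one]; exact G_int)
        rwa [uIcc_of_le zero_le_one] at h
      have hLi2cont : ContinuousWithinAt Li2 (Icc 0 1) 1 := by
        have := hcont 1 (right_mem_Icc.mpr zero_le_one)
        rw [show Li2 = fun y => ∫ t in (0:ℝ)..y, G t from funext Li2_eq]
        exact this
      rw [← Li2_one]
      apply hLi2cont.tendsto.comp
      apply tendsto_nhdsWithin_of_tendsto_nhds_of_eventually_within
      · have hco : Continuous (fun x : ℝ => 1 - x) := continuous_const.sub continuous_id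
        have := hco.tendsto (0:ℝ)
        norm_num at this
        exact this.mono_left nhdsWithin_le_nhds
      · filter_upwards [Ioo_mem_nhdsGT_of_mem (by norm_num : (0:ℝ) ∈ Ico (0:ℝ) 1)] with x hx
        constructor <;> [linarith [hx.2]; linarith [hx.1]]
    have hC : Tendsto (fun x : ℝ => Real.log x * Real.log (1 - x)) (𝓝[>] (0:ℝ)) (𝓝 0) := by
      have h1 : Tendsto (fun x : ℝ => x * Real.log x) (𝓝[>] (0:ℝ)) (𝓝 0) := by
        have := Real.continuous_mul_log.tendsto 0
        norm_num at this
        exact this.mono_left nhdsWithin_le_nhds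
      have h2 : Tendsto G (𝓝[>] (0:ℝ)) (𝓝 1) := by
        have := (contG (by norm_num : (0:ℝ) ≠ 1)).tendsto
        rw [G_zero] at this
        exact this.mono_left nhdsWithin_le_nhds
      have h3 : Tendsto (fun x : ℝ => -((x * Real.log x) * G x)) (𝓝[>] (0:ℝ)) (𝓝 (-(0 * 1))) :=
        (h1.mul h2).neg
      norm_num at h3
      apply h3.congr'
      filter_upwards [self_mem_nhdsWithin] with x (hx : 0 < x)
      rw [G_ne hx.ne']
      field_simp
    have := (hA.add hB).add hC
    norm_num at this
    exact this
  -- R is eventually constant = R (1/2) on 𝓝[>] 0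
  have heventually : ∀ᶠ c in 𝓝[>] (0:ℝ), R c = R (1/2) := by
    filter_upwards [Ioo_mem_nhdsGT_of_mem (by norm_num : (0:ℝ) ∈ Ico (0:ℝ) (1/2))] with c hc
    exact (hconst c ⟨hc.1, hc.2.le⟩).symm
  have : Tendsto R (𝓝[>] (0:ℝ)) (𝓝 (R (1/2))) :=
    tendsto_const_nhds.congr' (by filter_upwards [heventually] with c hc using hc.symm)
  exact tendsto_nhds_unique this hlim

lemma Li2_half : Li2 (1/2) = π^2/12 - (Real.log 2)^2 / 2 := by
  have h := R_half
  rw [R] at h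
  rw [show ((1:ℝ)/2) = 2⁻¹ from by norm_num]
  rw [show (1:ℝ) - 1/2 = 1/2 from by norm_num] at h
  rw [show ((1:ℝ)/2) = 2⁻¹ from by norm_num, Real.log_inv] at h
  linear_combination h / 2

theorem rogersL_hexagon :
    6 * rogersL (1 / 3) + 3 * rogersL (1 / 4) = π ^ 2 / 2 := by
  have l13 : Real.log ((1:ℝ)/3) = -Real.log 3 := by rw [one_div, Real.log_inv]
  have l23 : Real.log (1 - (1:ℝ)/3) = Real.log 2 - Real.log 3 := by
    rw [show (1:ℝ) - 1/3 = 2/3 from by norm_num,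
      Real.log_div (by norm_num) (by norm_num)]
  have l14 : Real.log ((1:ℝ)/4) = -(2*Real.log 2) := by
    rw [one_div, Real.log_inv, show (4:ℝ) = 2^2 from by norm_num, Real.log_pow]
    push_cast; ring
  have l34 : Real.log (1 - (1:ℝ)/4) = Real.log 3 - 2*Real.log 2 := by
    rw [show (1:ℝ) - 1/4 = 3/4 from by norm_num,
      Real.log_div (by norm_num) (by norm_num),
      show (4:ℝ) = 2^2 from by norm_num, Real.log_pow]
    push_cast; ring
  have hl := landen
  rw [l23] at hl
  have hd := dup
  have hh := Li2_half
  simp only [rogersL]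
  rw [show |(1:ℝ)/3| = 1/3 from by norm_num, show |(1:ℝ)/4| = 1/4 from by norm_num]
  rw [l13, l23, l14, l34]
  linear_combination 6*hl + 3*hd + 6*hh
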